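/- Let μ be a σ-finite measure on a measurable space, let β > 0 and ε ≥ 0, and let f, g be measurable real-valued functions with |f(a) - g(a)| ≤ ε for μ-almost every a, such that Z_f := ∫ exp(-f/β) dμ and Z_g := ∫ exp(-g/β) dμ both lie in (0, ∞). Let π_f and π_g be the Gibbs probability measures with densities w_f = exp(-f/β)/Z_f and w_g = exp(-g/β)/Z_g with respect to μ. Then the Kullback–Leibler divergence between the two Gibbs measures satisfies KL(π_f ‖ π_g) ≤ 2ε/β. -/

import Mathlib

open MeasureTheory

lemma gibbs_prob {A : Type*} [MeasurableSpace A] (μ : Measure A) (w : A → ℝ)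
    (hw0 : ∀ a, 0 ≤ w a) (hint : Integrable w μ)
    (hZ : 0 < ∫ a, w a ∂μ) :
    IsProbabilityMeasure (μ.withDensity fun a => ENNReal.ofReal (w a / ∫ b, w b ∂μ)) := by
  constructor
  rw [withDensity_apply _ MeasurableSet.univ, setLIntegral_univ]
  have h1 : ∫⁻ a, ENNReal.ofReal (w a / ∫ b, w b ∂μ) ∂μ
      = ENNReal.ofReal (∫ a, w a / ∫ b, w b ∂μ ∂μ) := by
    rw [← ofReal_integral_eq_lintegral_ofReal (hint.div_const _)
      (Filter.Eventually.of_forall fun a => div_nonneg (hw0 a) hZ.le)]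
  rw [h1, integral_div, div_self hZ.ne', ENNReal.ofReal_one]

/-- **KL stability of Gibbs measures under energy perturbation.**
Let `μ` be σ-finite, `β > 0`, `ε ≥ 0`, and `f, g` measurable with `|f - g| ≤ ε` μ-a.e.,
such that `Z_f = ∫ exp(-f/β) dμ` and `Z_g = ∫ exp(-g/β) dμ` are finite (the integrands are
integrable) and strictly positive.  Let `π_f, π_g` be the Gibbs probability measures with
densities `w_f = exp(-f/β)/Z_f` and `w_g = exp(-g/β)/Z_g` with respect to `μ`.  Then
`KL(π_f ‖ π_g) = ∫ log (dπ_f/dπ_g) dπ_f ≤ 2ε/β`. -/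
theorem gibbs_kl_bound
    {A : Type*} [MeasurableSpace A] (μ : Measure A) [SigmaFinite μ]
    (β ε : ℝ) (hβ : 0 < β) (hε : 0 ≤ ε)
    (f g : A → ℝ) (hf : Measurable f) (hg : Measurable g)
    (hfg : ∀ᵐ a ∂μ, |f a - g a| ≤ ε)
    (hZf : Integrable (fun a => Real.exp (-f a / β)) μ)
    (hZfpos : 0 < ∫ a, Real.exp (-f a / β) ∂μ)
    (hZg : Integrable (fun a => Real.exp (-g a / β)) μ)
    (hZgpos : 0 < ∫ a, Real.exp (-g a / β) ∂μ) :
    let πf : Measure A := μ.withDensity fun a =>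
      ENNReal.ofReal (Real.exp (-f a / β) / ∫ b, Real.exp (-f b / β) ∂μ)
    let πg : Measure A := μ.withDensity fun a =>
      ENNReal.ofReal (Real.exp (-g a / β) / ∫ b, Real.exp (-g b / β) ∂μ)
    ∫ a, Real.log ((πf.rnDeriv πg a).toReal) ∂πf ≤ 2 * ε / β := by
  intro πf πg
  set Zf := ∫ b, Real.exp (-f b / β) ∂μ with hZfdef
  set Zg := ∫ b, Real.exp (-g b / β) ∂μ with hZgdef
  set wf : A → ℝ := fun a => Real.exp (-f a / β) / Zf with hwf
  set wg : A → ℝ := fun a => Real.exp (-g a / β) / Zg with hwg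
  have hexpf : Measurable fun a => Real.exp (-f a / β) := (hf.neg.div_const β).exp
  have hexpg : Measurable fun a => Real.exp (-g a / β) := (hg.neg.div_const β).exp
  have hwf_pos : ∀ a, 0 < wf a := fun a => div_pos (Real.exp_pos _) hZfpos
  have hwg_pos : ∀ a, 0 < wg a := fun a => div_pos (Real.exp_pos _) hZgpos
  have hwf_meas : Measurable wf := hexpf.div_const _
  have hwg_meas : Measurable wg := hexpg.div_const _
  have hprobf : IsProbabilityMeasure πf :=
    gibbs_prob μ _ (fun a => (Real.exp_pos _).le) hZf hZfpos
  have hprobg : IsProbabilityMeasure πg :=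
    gibbs_prob μ _ (fun a => (Real.exp_pos _).le) hZg hZgpos
  -- the ratio density
  set r : A → ℝ := fun a => wf a / wg a with hr
  have hr_pos : ∀ a, 0 < r a := fun a => div_pos (hwf_pos a) (hwg_pos a)
  have hr_meas : Measurable r := hwf_meas.div hwg_meas
  have hrE_meas : Measurable fun a => ENNReal.ofReal (r a) :=
    hr_meas.ennreal_ofReal
  -- πf = πg.withDensity (ofReal ∘ r)
  have hπf_eq : πf = πg.withDensity fun a => ENNReal.ofReal (r a) := by
    rw [show πg = μ.withDensity fun a => ENNReal.ofReal (wg a) from rfl,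
      ← withDensity_mul μ (hwg_meas.ennreal_ofReal) hrE_meas]
    show μ.withDensity (fun a => ENNReal.ofReal (wf a)) = _
    congr 1
    funext a
    simp only [Pi.mul_apply]
    rw [← ENNReal.ofReal_mul (hwg_pos a).le]
    congr 1
    rw [hr]
    field_simp [(hwg_pos a).ne']
  have hac : πf ≪ πg := hπf_eq ▸ withDensity_absolutelyContinuous πg _
  -- rnDeriv identification
  have hrn : (fun a => πf.rnDeriv πg a) =ᵐ[πf] fun a => ENNReal.ofReal (r a) := by
    refine hac.ae_le ?_
    rw [hπf_eq]
    exact Measure.rnDeriv_withDensity πg hrE_meas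
  have hcongr : (fun a => Real.log ((πf.rnDeriv πg a).toReal))
      =ᵐ[πf] fun a => Real.log (r a) := by
    filter_upwards [hrn] with a ha
    rw [ha, ENNReal.toReal_ofReal (hr_pos a).le]
  -- log r explicitly
  have hlog : ∀ a, Real.log (r a) = (g a - f a) / β + (Real.log Zg - Real.log Zf) := by
    intro a
    rw [hr]
    rw [Real.log_div (hwf_pos a).ne' (hwg_pos a).ne', hwf, hwg,
      Real.log_div (Real.exp_pos _).ne' hZfpos.ne',
      Real.log_div (Real.exp_pos _).ne' hZgpos.ne',
      Real.log_exp, Real.log_exp]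
    ring
  -- push the a.e. bound to πf
  have hfgπ : ∀ᵐ a ∂πf, |f a - g a| ≤ ε := hac.ae_le ((withDensity_absolutelyContinuous μ _).ae_le hfg)
  set C := Real.log Zg - Real.log Zf with hC
  -- Zg ≤ exp(ε/β) * Zf, hence C ≤ ε/β
  have hZle : Zg ≤ Real.exp (ε / β) * Zf := by
    rw [hZgdef, hZfdef, ← integral_const_mul]
    refine integral_mono_ae hZg (hZf.const_mul _) ?_
    filter_upwards [hfg] with a ha
    rw [← Real.exp_add]
    apply Real.exp_le_exp.mpr
    have h1 : f a - g a ≤ ε := (abs_le.mp ha).2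
    rw [← add_div]
    apply div_le_div_of_nonneg_right _ hβ.le  <;> linarith
  have hCle : C ≤ ε / β := by
    have := Real.log_le_log hZgpos hZle
    rw [Real.log_mul (Real.exp_pos _).ne' hZfpos.ne', Real.log_exp] at this
    rw [hC]; linarith
  -- the integrand bound and integrability
  have hint : Integrable (fun a => (g a - f a) / β + C) πf := by
    refine Integrable.mono' (integrable_const (ε / β + |C|))
      (((hg.sub hf).div_const β).add_const C).aestronglyMeasurable ?_
    filter_upwards [hfgπ] with a ha
    have : |(g a - f a) / β| ≤ ε / β := by
      rw [abs_div, abs_of_pos hβ, abs_sub_comm]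
      exact div_le_div_of_nonneg_right ha hβ.le
    calc ‖(g a - f a) / β + C‖ ≤ |(g a - f a) / β| + |C| := abs_add_le _ _
      _ ≤ ε / β + |C| := by linarith
  have hmain : ∫ a, Real.log ((πf.rnDeriv πg a).toReal) ∂πf
      = ∫ a, ((g a - f a) / β + C) ∂πf := by
    refine integral_congr_ae (hcongr.trans ?_)
    exact Filter.Eventually.of_forall fun a => hlog a
  rw [hmain]
  have hbound : ∫ a, ((g a - f a) / β + C) ∂πf ≤ ∫ _, (2 * ε / β) ∂πf := by
    refine integral_mono_ae hint (integrable_const _) ?_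
    filter_upwards [hfgπ] with a ha
    have h1 : g a - f a ≤ ε := by have := (abs_le.mp ha).1; linarith
    have h2 : (g a - f a) / β ≤ ε / β := div_le_div_of_nonneg_right h1 hβ.le
    have : 2 * ε / β = ε / β + ε / β := by ring
    rw [this]
    linarith
  calc _ ≤ ∫ _, (2 * ε / β) ∂πf := hbound
    _ = 2 * ε / β := by rw [integral_const]; simp
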